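/- Let T be a tight k-tree with k ≥ 2. Then for any two distinct elements f, f′ of the shadow ∂T there exists a unique (f, f′)-pseudopath in T. -/

import Mathlib

open Finset

attribute [local instance] Classical.propDecidable

variable {α : Type*}

/-- The degree of a vertex `v` in a hypergraph `T`: the number of edges containing `v`. -/
def vdeg [DecidableEq α] (T : Finset (Finset α)) (v : α) : ℕ :=
  (T.filter fun e => v ∈ e).card

/-- The vertex set of a hypergraph: the union of its edges. -/
def hverts [DecidableEq α] (T : Finset (Finset α)) : Finset α := T.sup id

/-- The maximum 1-degree of a hypergraph. -/
def hmaxDeg [DecidableEq α] (T : Finset (Finset α)) : ℕ := (hverts T).sup (vdeg T)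

/-- `es` is a valid ordering of the edges of a tight `k`-tree: every edge is a `k`-set, and
every edge except the first contains a vertex `v` not in any previous edge with the rest of
the edge contained in some previous edge. -/
def ValidOrdering [DecidableEq α] (k : ℕ) (es : List (Finset α)) : Prop :=
  (∀ e ∈ es, e.card = k) ∧
  ∀ i, 0 < i → i < es.length →
    ∃ v ∈ es.getD i ∅,
      (∀ j, j < i → v ∉ es.getD j ∅) ∧
      ∃ j, j < i ∧ (es.getD i ∅) \ {v} ⊆ es.getD j ∅

/-- `T` is a tight `k`-tree: its edges admit a valid ordering. -/
def IsTightTree [DecidableEq α] (k : ℕ) (T : Finset (Finset α)) : Prop :=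
  ∃ es : List (Finset α), es ≠ [] ∧ es.Nodup ∧ es.toFinset = T ∧ ValidOrdering k es

/-- `f` belongs to the shadow of the `k`-graph `H`. -/
def InShadow [DecidableEq α] (k : ℕ) (H : Finset (Finset α)) (f : Finset α) : Prop :=
  f.card = k - 1 ∧ ∃ e ∈ H, f ⊆ e

/-- `H` contains (a copy of) `T`. -/
def Contains {β : Type*} [DecidableEq α] [DecidableEq β]
    (H : Finset (Finset α)) (T : Finset (Finset β)) : Prop :=
  ∃ φ : β → α, Function.Injective φ ∧ ∀ e ∈ T, e.image φ ∈ H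

/-- `es` is a valid ordering of a pseudopath: additionally, the parent of each edge `e_i`
(`i ≥ 2`) is the immediately preceding edge `e_{i−1}`, i.e. `e_{i−1}` is the earliest edge
containing `e_i` minus its new vertex. -/
def PseudopathOrdering [DecidableEq α] (k : ℕ) (es : List (Finset α)) : Prop :=
  ValidOrdering k es ∧
  ∀ i, 0 < i → i < es.length →
    ∃ v ∈ es.getD i ∅,
      (∀ j, j < i → v ∉ es.getD j ∅) ∧
      (es.getD i ∅) \ {v} ⊆ es.getD (i - 1) ∅ ∧
      ∀ j, j < i - 1 → ¬ (es.getD i ∅) \ {v} ⊆ es.getD j ∅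

/-- `P` is an `(f, f')`-pseudopath in `H`: a pseudopath all of whose edges lie in `H`, with a
valid ordering `e_1, …, e_t` such that `f ⊆ e_i` iff `i = 1` and `f' ⊆ e_j` iff `j = t`. -/
def IsPseudopathBetween [DecidableEq α] (k : ℕ) (H : Finset (Finset α))
    (f f' : Finset α) (P : Finset (Finset α)) : Prop :=
  P ⊆ H ∧
  ∃ es : List (Finset α), es ≠ [] ∧ es.Nodup ∧ es.toFinset = P ∧
    PseudopathOrdering k es ∧
    (∀ i, i < es.length → (f ⊆ es.getD i ∅ ↔ i = 0)) ∧
    (∀ j, j < es.length → (f' ⊆ es.getD j ∅ ↔ j = es.length - 1))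

set_option linter.unusedSectionVars false

namespace PPaux
variable [DecidableEq α]

lemma getD_mem {l : List (Finset α)} {i : ℕ} (h : i < l.length) : l.getD i ∅ ∈ l := by
  rw [List.getD_eq_getElem _ _ h]; exact List.getElem_mem h

lemma mem_iff_getD {l : List (Finset α)} {e : Finset α} :
    e ∈ l ↔ ∃ i, i < l.length ∧ l.getD i ∅ = e := by
  constructor
  · intro h
    obtain ⟨i, hi, he⟩ := List.mem_iff_getElem.1 h
    exact ⟨i, hi, by rw [List.getD_eq_getElem _ _ hi]; exact he⟩
  · rintro ⟨i, hi, rfl⟩; exact getD_mem hi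

lemma getD_take {l : List (Finset α)} {m i : ℕ} (him : i < m) :
    (l.take m).getD i ∅ = l.getD i ∅ := by
  by_cases hi : i < l.length
  · have h1 : i < (l.take m).length := by simp [List.length_take]; omega
    rw [List.getD_eq_getElem _ _ h1, List.getD_eq_getElem _ _ hi, List.getElem_take]
  · have h1 : l.length ≤ i := by omega
    have h2 : (l.take m).length ≤ i := by simp [List.length_take]; omega
    rw [List.getD_eq_default _ _ h2, List.getD_eq_default _ _ h1]

lemma pseudo_take {k : ℕ} {l : List (Finset α)} {m : ℕ} (h : PseudopathOrdering k l) :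
    PseudopathOrdering k (l.take m) := by
  obtain ⟨⟨hcard, _⟩, hps⟩ := h
  have hlen : (l.take m).length ≤ m := by simp [List.length_take]
  have hlen2 : (l.take m).length ≤ l.length := by simp [List.length_take]
  have key : ∀ i, 0 < i → i < (l.take m).length →
      ∃ v ∈ (l.take m).getD i ∅,
        (∀ j, j < i → v ∉ (l.take m).getD j ∅) ∧
        ((l.take m).getD i ∅) \ {v} ⊆ (l.take m).getD (i - 1) ∅ ∧
        ∀ j, j < i - 1 → ¬ ((l.take m).getD i ∅) \ {v} ⊆ (l.take m).getD j ∅ := by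
    intro i h0 hi
    obtain ⟨v, hv, hnew, hsub, hmin⟩ := hps i h0 (lt_of_lt_of_le hi hlen2)
    rw [getD_take (lt_of_lt_of_le hi hlen)]
    refine ⟨v, hv, fun j hj => by rw [getD_take (by omega)]; exact hnew j hj,
      by rw [getD_take (by omega)]; exact hsub,
      fun j hj => by rw [getD_take (by omega)]; exact hmin j hj⟩
  refine ⟨⟨fun e he => hcard e (List.mem_of_mem_take he), ?_⟩, key⟩
  intro i h0 hi
  obtain ⟨v, hv, hnew, hsub, _⟩ := key i h0 hi
  exact ⟨v, hv, hnew, i - 1, by omega, hsub⟩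

lemma pseudo_tail {k : ℕ} {a : Finset α} {l : List (Finset α)}
    (h : PseudopathOrdering k (a :: l)) : PseudopathOrdering k l := by
  obtain ⟨⟨hcard, _⟩, hps⟩ := h
  have key : ∀ i, 0 < i → i < l.length →
      ∃ v ∈ l.getD i ∅,
        (∀ j, j < i → v ∉ l.getD j ∅) ∧
        (l.getD i ∅) \ {v} ⊆ l.getD (i - 1) ∅ ∧
        ∀ j, j < i - 1 → ¬ (l.getD i ∅) \ {v} ⊆ l.getD j ∅ := by
    intro i h0 hi
    obtain ⟨v, hv, hnew, hsub, hmin⟩ := hps (i + 1) (by omega) (by simpa using by omega)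
    simp only [List.getD_cons_succ] at hv hsub hmin hnew
    have hii : i + 1 - 1 = i := by omega
    rw [hii] at hsub
    obtain ⟨i', rfl⟩ : ∃ i', i = i' + 1 := ⟨i - 1, by omega⟩
    simp only [List.getD_cons_succ] at hsub
    refine ⟨v, hv, fun j hj => ?_, by simpa using hsub, fun j hj => ?_⟩
    · have := hnew (j + 1) (by omega); simpa using this
    · have := hmin (j + 1) (by omega); simpa using this
  refine ⟨⟨fun e he => hcard e (List.mem_cons_of_mem _ he), ?_⟩, key⟩
  intro i h0 hi
  obtain ⟨v, hv, hnew, hsub, _⟩ := key i h0 hi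
  exact ⟨v, hv, hnew, i - 1, by omega, hsub⟩

lemma new_vertex_unique {k : ℕ} {qs : List (Finset α)} (hps : PseudopathOrdering k qs)
    {i : ℕ} (h0 : 0 < i) (hi : i < qs.length) {v : α}
    (hvi : v ∈ qs.getD i ∅) (hv1 : v ∉ qs.getD (i - 1) ∅) :
    (∀ j, j < i → v ∉ qs.getD j ∅) ∧
    (qs.getD i ∅) \ {v} ⊆ qs.getD (i - 1) ∅ ∧
    ∀ j, j < i - 1 → ¬ (qs.getD i ∅) \ {v} ⊆ qs.getD j ∅ := by
  obtain ⟨w, hw, hnew, hsub, hmin⟩ := hps.2 i h0 hi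
  have hwv : w = v := by
    by_contra hne
    exact hv1 (hsub (Finset.mem_sdiff.2 ⟨hvi, by simp [Ne.symm hne]⟩))
  subst hwv
  exact ⟨hnew, hsub, hmin⟩

end PPaux

namespace PPaux
variable [DecidableEq α]

lemma nodup_getD_inj {l : List (Finset α)} (h : l.Nodup) {i j : ℕ}
    (hi : i < l.length) (hj : j < l.length) (he : l.getD i ∅ = l.getD j ∅) : i = j := by
  rw [List.getD_eq_getElem _ _ hi, List.getD_eq_getElem _ _ hj] at he
  exact h.getElem_inj_iff.1 he

lemma main_lemma (k : ℕ) (hk : 2 ≤ k) :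
    ∀ (n : ℕ) (es : List (Finset α)), es.length = n → es ≠ [] → es.Nodup →
      ValidOrdering k es →
      ∀ f f' : Finset α, InShadow k es.toFinset f → InShadow k es.toFinset f' → f ≠ f' →
      ∃! P, IsPseudopathBetween k es.toFinset f f' P := by
  intro n
  induction n using Nat.strong_induction_on with
  | _ n IH =>
  intro es hlen hne hnd hval f f' hf hf' hff
  have hlpos : 0 < es.length := List.length_pos_iff.2 hne
  rcases Nat.lt_or_ge n 2 with hn2 | hn2
  · -- base case : es = [e]
    obtain ⟨e, rfl⟩ := List.length_eq_one_iff.1 (by omega : es.length = 1)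
    have hfe : f ⊆ e := by
      obtain ⟨_, e'', he'', h⟩ := hf
      simp only [List.toFinset_cons, List.toFinset_nil, insert_empty_eq,
        Finset.mem_singleton] at he''
      subst he''; exact h
    have hfe' : f' ⊆ e := by
      obtain ⟨_, e'', he'', h⟩ := hf'
      simp only [List.toFinset_cons, List.toFinset_nil, insert_empty_eq,
        Finset.mem_singleton] at he''
      subst he''; exact h
    have hcard : e.card = k := hval.1 e (by simp)
    refine ⟨{e}, ⟨by simp, [e], by simp, by simp, by simp, ⟨⟨by simpa, ?_⟩, ?_⟩, ?_, ?_⟩, ?_⟩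
    · intro i h0 h1; simp at h1; omega
    · intro i h0 h1; simp at h1; omega
    · intro i hi; simp at hi; subst hi; simpa using hfe
    · intro i hi; simp at hi; subst hi; simpa using hfe'
    · intro Q hQ
      obtain ⟨hQsub, qs, hqne, _, hqfin, _, _, _⟩ := hQ
      have hQne : Q.Nonempty := by
        rw [← hqfin]; exact (List.toFinset_nonempty_iff qs).2 hqne
      have := hQsub
      simp only [List.toFinset_cons, List.toFinset_nil, insert_empty_eq] at this
      rcases Finset.subset_singleton_iff.1 this with h | h
      · exact absurd h (Finset.nonempty_iff_ne_empty.1 hQne)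
      · simpa using h
  · -- inductive step
    set m := n - 1 with hm
    have h0m : 0 < m := by omega
    have hmlen : m < es.length := by omega
    set et := es.getD m ∅ with het
    set es₀ := es.dropLast with hes₀
    have hlen₀ : es₀.length = m := by simp [hes₀, hlen, hm]
    have hne₀ : es₀ ≠ [] := by rw [← List.length_pos_iff, hlen₀]; omega
    have hsplit : es = es₀ ++ [et] := by
      have h1 := List.dropLast_append_getLast hne
      have h2 : es.getLast hne = es.getD m ∅ := by
        rw [List.getD_eq_getElem _ _ hmlen, List.getLast_eq_getElem]
        congr 1; omega
      rw [het, hes₀, ← h2]; exact h1.symm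
    have haggr : ∀ i, i < m → es₀.getD i ∅ = es.getD i ∅ := by
      intro i hi
      rw [hes₀, List.dropLast_eq_take, getD_take (by omega)]
    have hval₀ : ValidOrdering k es₀ := by
      refine ⟨fun e he => hval.1 e (List.mem_of_mem_dropLast he), ?_⟩
      intro i h0 hi
      rw [hlen₀] at hi
      obtain ⟨v, hv, hnew, j, hj, hsub⟩ := hval.2 i h0 (by omega)
      rw [haggr i hi]
      exact ⟨v, hv, fun j' hj' => by rw [haggr j' (by omega)]; exact hnew j' hj',
        j, hj, by rw [haggr j (by omega)]; exact hsub⟩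
    have hndsplit := List.nodup_append.1 (hsplit ▸ hnd)
    have hnd₀ : es₀.Nodup := hndsplit.1
    have hetnm : et ∉ es₀ := fun h => hndsplit.2.2 et h et (by simp) rfl
    obtain ⟨v, hvet, hvnew, p, hp, hpsub⟩ := hval.2 m h0m hmlen
    rw [← het] at hvet hpsub
    have hTins : es.toFinset = insert et es₀.toFinset := by
      ext x
      rw [hsplit]
      simp [or_comm]
    have hT'v : ∀ e ∈ es₀.toFinset, v ∉ e := by
      intro e he
      obtain ⟨i, hi, rfl⟩ := mem_iff_getD.1 (List.mem_toFinset.1 he)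
      rw [hlen₀] at hi
      rw [haggr i hi]
      exact hvnew i hi
    have hvF3 : ∀ e ∈ es.toFinset, v ∈ e → e = et := by
      intro e he hv
      rcases Finset.mem_insert.1 (hTins ▸ he) with h | h
      · exact h
      · exact absurd hv (hT'v e h)
    have hetT : et ∈ es.toFinset := by rw [hTins]; exact Finset.mem_insert_self _ _
    have hT'T : es₀.toFinset ⊆ es.toFinset := by rw [hTins]; exact Finset.subset_insert _ _
    have hcet : et.card = k := hval.1 et (getD_mem hmlen)
    set g := et \ {v} with hg
    have hgc : g.card = k - 1 := by
      rw [hg, Finset.card_sdiff_of_subset (Finset.singleton_subset_iff.2 hvet), hcet, Finset.card_singleton]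
    have hetg : et = insert v g := by
      rw [hg, Finset.sdiff_singleton_eq_erase, Finset.insert_erase hvet]
    have hsub_g : ∀ S : Finset α, S ⊆ et → v ∉ S → S ⊆ g := by
      intro S hS hvS x hx
      rw [hg, Finset.mem_sdiff, Finset.mem_singleton]
      exact ⟨hS hx, fun h => hvS (h ▸ hx)⟩
    have heq_g : ∀ S : Finset α, S ⊆ et → v ∉ S → S.card = k - 1 → S = g := by
      intro S hS hvS hc
      exact Finset.eq_of_subset_of_card_le (hsub_g S hS hvS) (by omega)
    have hpT' : es.getD p ∅ ∈ es₀.toFinset := by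
      rw [← haggr p hp]
      exact List.mem_toFinset.2 (getD_mem (by omega))
    have hgshadow : InShadow k es₀.toFinset g := ⟨hgc, es.getD p ∅, hpT', hpsub⟩
    have hshadow' : ∀ h : Finset α, v ∉ h → InShadow k es.toFinset h →
        InShadow k es₀.toFinset h := by
      rintro h hvh ⟨hc, e'', he'', hsub''⟩
      rcases Finset.mem_insert.1 (hTins ▸ he'') with rfl | hmem
      · exact ⟨hc, es.getD p ∅, hpT', (hsub_g h hsub'' hvh).trans hpsub⟩
      · exact ⟨hc, e'', hmem, hsub''⟩
    have IH₀ := IH m (by omega) es₀ hlen₀ hne₀ hnd₀ hval₀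
    by_cases hvf : v ∈ f <;> by_cases hvf' : v ∈ f'
    · -- case B : v ∈ f, v ∈ f'
      have hfet : f ⊆ et := by
        obtain ⟨_, e'', he'', hsub''⟩ := hf
        rwa [hvF3 e'' he'' (hsub'' hvf)] at hsub''
      have hf'et : f' ⊆ et := by
        obtain ⟨_, e'', he'', hsub''⟩ := hf'
        rwa [hvF3 e'' he'' (hsub'' hvf')] at hsub''
      refine ⟨{et}, ⟨by simpa using hetT, [et], by simp, by simp, by simp,
        ⟨⟨by simpa using hcet, ?_⟩, ?_⟩, ?_, ?_⟩, ?_⟩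
      · intro i h0 h1; simp at h1; omega
      · intro i h0 h1; simp at h1; omega
      · intro i hi; simp at hi; subst hi; simpa using hfet
      · intro i hi; simp at hi; subst hi; simpa using hf'et
      · intro Q hQ
        obtain ⟨hQsub, qs, hqne, hqnd, hqfin, hqps, hqf, hqf'⟩ := hQ
        have hql : 0 < qs.length := List.length_pos_iff.2 hqne
        have hqT : ∀ i, i < qs.length → qs.getD i ∅ ∈ es.toFinset := fun i hi =>
          hQsub (hqfin ▸ List.mem_toFinset.2 (getD_mem hi))
        have h0et : qs.getD 0 ∅ = et :=
          hvF3 _ (hqT 0 hql) ((hqf 0 hql).2 rfl hvf)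
        have hlet : qs.getD (qs.length - 1) ∅ = et :=
          hvF3 _ (hqT _ (by omega)) ((hqf' _ (by omega)).2 rfl hvf')
        have h10 : qs.length - 1 = 0 := nodup_getD_inj hqnd (by omega) hql (hlet.trans h0et.symm)
        obtain ⟨a, rfl⟩ := List.length_eq_one_iff.1 (by omega : qs.length = 1)
        have : a = et := by simpa using h0et
        subst this
        rw [← hqfin]; simp
    · -- case C : v ∈ f, v ∉ f'
      have hfet : f ⊆ et := by
        obtain ⟨_, e'', he'', hsub''⟩ := hf
        rwa [hvF3 e'' he'' (hsub'' hvf)] at hsub''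
      by_cases hgf' : g = f'
      · -- C1 : the path is {et}
        refine ⟨{et}, ⟨by simpa using hetT, [et], by simp, by simp, by simp,
          ⟨⟨by simpa using hcet, ?_⟩, ?_⟩, ?_, ?_⟩, ?_⟩
        · intro i h0 h1; simp at h1; omega
        · intro i h0 h1; simp at h1; omega
        · intro i hi; simp at hi; subst hi; simpa using hfet
        · intro i hi; simp at hi; subst hi
          have hf'et : f' ⊆ et := by rw [← hgf', hg]; exact Finset.sdiff_subset
          simpa using hf'et
        · intro Q hQ
          obtain ⟨hQsub, qs, hqne, hqnd, hqfin, hqps, hqf, hqf'⟩ := hQ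
          have hql : 0 < qs.length := List.length_pos_iff.2 hqne
          have hqT : ∀ i, i < qs.length → qs.getD i ∅ ∈ es.toFinset := fun i hi =>
            hQsub (hqfin ▸ List.mem_toFinset.2 (getD_mem hi))
          have hqcard : ∀ i, i < qs.length → (qs.getD i ∅).card = k := fun i hi =>
            hqps.1.1 _ (getD_mem hi)
          have h0et : qs.getD 0 ∅ = et := hvF3 _ (hqT 0 hql) ((hqf 0 hql).2 rfl hvf)
          have hq1 : qs.length = 1 := by
            by_contra hq1
            have hq2 : 2 ≤ qs.length := by omega
            obtain ⟨u, hu, hunew, husub, _⟩ := hqps.2 1 one_pos (by omega)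
            rw [Nat.sub_self, h0et] at husub
            have h1T' : qs.getD 1 ∅ ∈ es₀.toFinset := by
              refine (Finset.mem_insert.1 (hTins ▸ hqT 1 (by omega))).resolve_left ?_
              intro h
              exact one_ne_zero (nodup_getD_inj hqnd (by omega) hql (h.trans h0et.symm))
            have h1v : v ∉ qs.getD 1 ∅ := hT'v _ h1T'
            have hS : qs.getD 1 ∅ \ {u} = g := by
              refine heq_g _ husub ?_ ?_
              · simp only [Finset.mem_sdiff]; tauto
              · rw [Finset.card_sdiff_of_subset (Finset.singleton_subset_iff.2 hu),
                  hqcard 1 (by omega), Finset.card_singleton]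
            have hf'1 : f' ⊆ qs.getD 1 ∅ := by
              rw [← hgf', ← hS]; exact Finset.sdiff_subset
            have hl2 : qs.length = 2 := by
              have := (hqf' 1 (by omega)).1 hf'1; omega
            have hf'0 : f' ⊆ qs.getD 0 ∅ := by
              rw [h0et, ← hgf', hg]; exact Finset.sdiff_subset
            have := (hqf' 0 hql).1 hf'0
            omega
          obtain ⟨a, rfl⟩ := List.length_eq_one_iff.1 hq1
          have : a = et := by simpa using h0et
          subst this
          rw [← hqfin]; simp
      · -- C2 : g ≠ f'
        obtain ⟨P', hP', hP'u⟩ := IH₀ g f' hgshadow (hshadow' f' hvf' hf') hgf'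
        obtain ⟨hP'sub, ps, hpne, hpnd, hpfin, hpps, hpg, hpf'⟩ := hP'
        have hpl : 0 < ps.length := List.length_pos_iff.2 hpne
        have hpsT' : ∀ i, i < ps.length → ps.getD i ∅ ∈ es₀.toFinset := fun i hi =>
          hP'sub (hpfin ▸ List.mem_toFinset.2 (getD_mem hi))
        have hpsv : ∀ i, i < ps.length → v ∉ ps.getD i ∅ := fun i hi => hT'v _ (hpsT' i hi)
        have hpcard : ∀ i, i < ps.length → (ps.getD i ∅).card = k := fun i hi =>
          hpps.1.1 _ (getD_mem hi)
        have hetps : et ∉ ps := by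
          intro h
          exact hT'v et (hP'sub (hpfin ▸ List.mem_toFinset.2 h)) hvet
        have hg0 : g ⊆ ps.getD 0 ∅ := (hpg 0 hpl).2 rfl
        have hmain : ∀ i, 0 < i → i < (et :: ps).length →
            ∃ w ∈ (et :: ps).getD i ∅,
              (∀ j, j < i → w ∉ (et :: ps).getD j ∅) ∧
              ((et :: ps).getD i ∅) \ {w} ⊆ (et :: ps).getD (i - 1) ∅ ∧
              ∀ j, j < i - 1 → ¬ ((et :: ps).getD i ∅) \ {w} ⊆ (et :: ps).getD j ∅ := by
          intro i h0 hi
          simp only [List.length_cons] at hi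
          rcases i with _ | i
          · omega
          rcases i with _ | i'
          · -- i = 1
            have hc0 : (ps.getD 0 ∅).card = k := hpcard 0 hpl
            have hne0 : (ps.getD 0 ∅ \ g).Nonempty := by
              rw [← Finset.card_pos, Finset.card_sdiff_of_subset hg0]; omega
            obtain ⟨u, hu⟩ := hne0
            obtain ⟨hu1, hu2⟩ := Finset.mem_sdiff.1 hu
            have hSg : ps.getD 0 ∅ \ {u} = g := by
              refine (Finset.eq_of_subset_of_card_le ?_ ?_).symm
              · intro x hx
                refine Finset.mem_sdiff.2 ⟨hg0 hx, ?_⟩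
                simp only [Finset.mem_singleton]
                rintro rfl
                exact hu2 hx
              · rw [Finset.card_sdiff_of_subset (Finset.singleton_subset_iff.2 hu1), hc0, hgc, Finset.card_singleton]
            refine ⟨u, by simpa using hu1, ?_, ?_, ?_⟩
            · intro j hj
              interval_cases j
              simp only [List.getD_cons_zero]
              rw [hetg]
              simp only [Finset.mem_insert]
              rintro (rfl | h)
              · exact hpsv 0 hpl hu1
              · exact hu2 h
            · simp only [List.getD_cons_succ, List.getD_cons_zero, Nat.sub_self]
              rw [hSg, hg]
              exact Finset.sdiff_subset
            · intro j hj; omega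
          · -- i = i' + 2
            have hi' : i' + 1 < ps.length := by omega
            obtain ⟨u, hu, hunew, husub, humin⟩ := hpps.2 (i' + 1) (by omega) hi'
            rw [show i' + 1 - 1 = i' by omega] at husub
            have huv : u ≠ v := fun h => hpsv (i' + 1) hi' (h ▸ hu)
            refine ⟨u, by simpa using hu, ?_, ?_, ?_⟩
            · intro j hj
              rcases j with _ | j'
              · simp only [List.getD_cons_zero]
                rw [hetg]
                simp only [Finset.mem_insert]
                rintro (rfl | h)
                · exact huv rfl
                · exact hunew 0 (by omega) (hg0 h)
              · simp only [List.getD_cons_succ]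
                exact hunew j' (by omega)
            · simpa using husub
            · intro j hj
              rcases j with _ | j'
              · simp only [List.getD_cons_succ, List.getD_cons_zero]
                intro hsubet
                have hvne : v ∉ ps.getD (i' + 1) ∅ \ {u} := by
                  simp only [Finset.mem_sdiff]
                  intro h
                  exact hpsv (i' + 1) hi' h.1
                have hSg2 : ps.getD (i' + 1) ∅ \ {u} = g := by
                  refine heq_g _ hsubet hvne ?_
                  rw [Finset.card_sdiff_of_subset (Finset.singleton_subset_iff.2 hu),
                    hpcard (i' + 1) hi', Finset.card_singleton]
                have hgsub : g ⊆ ps.getD (i' + 1) ∅ := by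
                  rw [← hSg2]; exact Finset.sdiff_subset
                have := (hpg (i' + 1) hi').1 hgsub
                omega
              · simp only [List.getD_cons_succ]
                exact humin j' (by omega)
        refine ⟨insert et P', ⟨Finset.insert_subset hetT (hP'sub.trans hT'T),
          et :: ps, by simp, List.nodup_cons.2 ⟨hetps, hpnd⟩, by simp [hpfin],
          ⟨⟨?_, ?_⟩, hmain⟩, ?_, ?_⟩, ?_⟩
        · intro e he
          rcases List.mem_cons.1 he with rfl | h
          · exact hcet
          · exact hpps.1.1 e h
        · intro i h0 hi
          obtain ⟨w, h1, h2, h3, _⟩ := hmain i h0 hi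
          exact ⟨w, h1, h2, i - 1, by omega, h3⟩
        · intro i hi
          rcases i with _ | j
          · simpa using hfet
          · simp only [List.getD_cons_succ, List.length_cons] at hi ⊢
            constructor
            · intro h
              exact absurd (h hvf) (hpsv j (by omega))
            · omega
        · intro j hj
          simp only [List.length_cons] at hj
          rcases j with _ | j'
          · simp only [List.getD_cons_zero, List.length_cons, Nat.add_sub_cancel]
            constructor
            · intro h
              exact absurd (heq_g f' h hvf' hf'.1).symm hgf'
            · omega
          · simp only [List.getD_cons_succ, List.length_cons, Nat.add_sub_cancel]
            rw [hpf' j' (by omega)]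
            omega
        · intro Q hQ
          obtain ⟨hQsub, qs, hqne, hqnd, hqfin, hqps, hqf, hqf'⟩ := hQ
          have hql : 0 < qs.length := List.length_pos_iff.2 hqne
          have hqT : ∀ i, i < qs.length → qs.getD i ∅ ∈ es.toFinset := fun i hi =>
            hQsub (hqfin ▸ List.mem_toFinset.2 (getD_mem hi))
          have h0et : qs.getD 0 ∅ = et := hvF3 _ (hqT 0 hql) ((hqf 0 hql).2 rfl hvf)
          obtain ⟨a, rest, rfl⟩ := List.exists_cons_of_ne_nil hqne
          have haet : a = et := by simpa using h0et
          subst haet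
          have hrne : rest ≠ [] := by
            intro h
            subst h
            have hf'0 : f' ⊆ et := by simpa using (hqf' 0 (by simp)).2 (by simp)
            exact hgf' (heq_g f' hf'0 hvf' hf'.1).symm
          have hrl : 0 < rest.length := List.length_pos_iff.2 hrne
          have hetrest : et ∉ rest := (List.nodup_cons.1 hqnd).1
          have hrT' : ∀ i, i < rest.length → rest.getD i ∅ ∈ es₀.toFinset := by
            intro i hi
            have hmem : rest.getD i ∅ ∈ es.toFinset := by
              have := hqT (i + 1) (by simp; omega)
              simpa using this
            refine (Finset.mem_insert.1 (hTins ▸ hmem)).resolve_left ?_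
            intro h
            exact hetrest (h ▸ getD_mem hi)
          have hrv : ∀ i, i < rest.length → v ∉ rest.getD i ∅ := fun i hi => hT'v _ (hrT' i hi)
          have hrcard : ∀ i, i < rest.length → (rest.getD i ∅).card = k := fun i hi =>
            hqps.1.1 _ (List.mem_cons_of_mem _ (getD_mem hi))
          obtain ⟨u, hu, hunew, husub, _⟩ := hqps.2 1 one_pos (by simp; omega)
          rw [Nat.sub_self] at husub
          simp only [List.getD_cons_succ, List.getD_cons_zero] at hu husub
          have hS0 : rest.getD 0 ∅ \ {u} = g := by
            refine heq_g _ husub ?_ ?_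
            · simp only [Finset.mem_sdiff]
              intro h
              exact hrv 0 hrl h.1
            · rw [Finset.card_sdiff_of_subset (Finset.singleton_subset_iff.2 hu), hrcard 0 hrl,
                Finset.card_singleton]
          have hg0r : g ⊆ rest.getD 0 ∅ := by rw [← hS0]; exact Finset.sdiff_subset
          have hgend : ∀ i, i < rest.length → (g ⊆ rest.getD i ∅ ↔ i = 0) := by
            intro i hi
            rcases i with _ | i'
            · simpa using hg0r
            constructor
            · intro hgsub
              exfalso
              obtain ⟨w, hw, hwnew, hwsub, hwmin⟩ := hqps.2 (i' + 2) (by omega) (by simp; omega)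
              simp only [List.getD_cons_succ] at hw hwmin
              have hwg : w ∉ g := fun h => hwnew 1 (by omega) (by simpa using hg0r h)
              have hSeq : g = rest.getD (i' + 1) ∅ \ {w} := by
                refine Finset.eq_of_subset_of_card_le ?_ ?_
                · intro x hx
                  refine Finset.mem_sdiff.2 ⟨hgsub hx, ?_⟩
                  simp only [Finset.mem_singleton]
                  rintro rfl
                  exact hwg hx
                · rw [Finset.card_sdiff_of_subset (Finset.singleton_subset_iff.2 hw),
                    hrcard (i' + 1) (by omega), Finset.card_singleton, hgc]
              refine hwmin 0 (by omega) ?_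
              simp only [List.getD_cons_zero]
              rw [← hSeq, hg]
              exact Finset.sdiff_subset
            · omega
          have hf'end : ∀ j, j < rest.length → (f' ⊆ rest.getD j ∅ ↔ j = rest.length - 1) := by
            intro j hj
            have := hqf' (j + 1) (by simp; omega)
            simp only [List.getD_cons_succ, List.length_cons, Nat.add_sub_cancel] at this
            rw [this]
            omega
          have hrestP : IsPseudopathBetween k es₀.toFinset g f' rest.toFinset := by
            refine ⟨?_, rest, hrne, (List.nodup_cons.1 hqnd).2, rfl, pseudo_tail hqps,
              hgend, hf'end⟩
            intro q hq
            obtain ⟨i, hi, rfl⟩ := mem_iff_getD.1 (List.mem_toFinset.1 hq)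
            exact hrT' i hi
          have hrP' : rest.toFinset = P' := hP'u _ hrestP
          rw [← hqfin]
          simp [hrP']
    · -- case D : v ∉ f, v ∈ f'
      have hf'et : f' ⊆ et := by
        obtain ⟨_, e'', he'', hsub''⟩ := hf'
        rwa [hvF3 e'' he'' (hsub'' hvf')] at hsub''
      by_cases hgf : g = f
      · -- D1 : the path is {et}
        refine ⟨{et}, ⟨by simpa using hetT, [et], by simp, by simp, by simp,
          ⟨⟨by simpa using hcet, ?_⟩, ?_⟩, ?_, ?_⟩, ?_⟩
        · intro i h0 h1; simp at h1; omega
        · intro i h0 h1; simp at h1; omega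
        · intro i hi; simp at hi; subst hi
          have hfsube : f ⊆ et := by rw [← hgf, hg]; exact Finset.sdiff_subset
          simpa using hfsube
        · intro i hi; simp at hi; subst hi; simpa using hf'et
        · intro Q hQ
          obtain ⟨hQsub, qs, hqne, hqnd, hqfin, hqps, hqf, hqf'⟩ := hQ
          have hql : 0 < qs.length := List.length_pos_iff.2 hqne
          have hqT : ∀ i, i < qs.length → qs.getD i ∅ ∈ es.toFinset := fun i hi =>
            hQsub (hqfin ▸ List.mem_toFinset.2 (getD_mem hi))
          have hlet : qs.getD (qs.length - 1) ∅ = et :=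
            hvF3 _ (hqT _ (by omega)) ((hqf' _ (by omega)).2 rfl hvf')
          have hq1 : qs.length = 1 := by
            by_contra hq1
            have hq2 : 2 ≤ qs.length := by omega
            have hprevT' : qs.getD (qs.length - 2) ∅ ∈ es₀.toFinset := by
              refine (Finset.mem_insert.1 (hTins ▸ hqT _ (by omega))).resolve_left ?_
              intro h
              have := nodup_getD_inj hqnd (show qs.length - 2 < qs.length by omega)
                (show qs.length - 1 < qs.length by omega) (h.trans hlet.symm)
              omega
            have hprev' : v ∉ qs.getD (qs.length - 1 - 1) ∅ := by
              rw [show qs.length - 1 - 1 = qs.length - 2 by omega]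
              exact hT'v _ hprevT'
            obtain ⟨hnew, hsubp, hmin⟩ := new_vertex_unique hqps
              (show 0 < qs.length - 1 by omega) (by omega) (by rw [hlet]; exact hvet) hprev'
            rw [hlet] at hsubp
            rw [show qs.length - 1 - 1 = qs.length - 2 by omega] at hsubp
            have hfsub : f ⊆ qs.getD (qs.length - 2) ∅ := by
              rw [← hgf, hg]; exact hsubp
            have h20 := (hqf _ (show qs.length - 2 < qs.length by omega)).1 hfsub
            have hfsub1 : f ⊆ qs.getD (qs.length - 1) ∅ := by
              rw [hlet, ← hgf, hg]; exact Finset.sdiff_subset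
            have := (hqf _ (show qs.length - 1 < qs.length by omega)).1 hfsub1
            omega
          obtain ⟨a, rfl⟩ := List.length_eq_one_iff.1 hq1
          have : a = et := by simpa using hlet
          subst this
          rw [← hqfin]; simp
      · -- D2 : g ≠ f
        have hfsh : InShadow k es₀.toFinset f := hshadow' f hvf hf
        have hfg : f ≠ g := fun h => hgf h.symm
        obtain ⟨P', hP', hP'u⟩ := IH₀ f g hfsh hgshadow hfg
        obtain ⟨hP'sub, ps, hpne, hpnd, hpfin, hpps, hpf, hpg⟩ := hP'
        have hpl : 0 < ps.length := List.length_pos_iff.2 hpne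
        have hpsT' : ∀ i, i < ps.length → ps.getD i ∅ ∈ es₀.toFinset := fun i hi =>
          hP'sub (hpfin ▸ List.mem_toFinset.2 (getD_mem hi))
        have hpsv : ∀ i, i < ps.length → v ∉ ps.getD i ∅ := fun i hi => hT'v _ (hpsT' i hi)
        have hetps : et ∉ ps := by
          intro h
          exact hT'v et (hP'sub (hpfin ▸ List.mem_toFinset.2 h)) hvet
        have hgetD : ∀ i, i < ps.length → (ps ++ [et]).getD i ∅ = ps.getD i ∅ :=
          fun i hi => List.getD_append ps [et] ∅ i hi
        have hgetDlast : (ps ++ [et]).getD ps.length ∅ = et := by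
          rw [List.getD_append_right ps [et] ∅ ps.length le_rfl, Nat.sub_self]
          rfl
        have hlenapp : (ps ++ [et]).length = ps.length + 1 := by simp
        have hglast : g ⊆ ps.getD (ps.length - 1) ∅ := (hpg _ (by omega)).2 rfl
        have hmain : ∀ i, 0 < i → i < (ps ++ [et]).length →
            ∃ w ∈ (ps ++ [et]).getD i ∅,
              (∀ j, j < i → w ∉ (ps ++ [et]).getD j ∅) ∧
              ((ps ++ [et]).getD i ∅) \ {w} ⊆ (ps ++ [et]).getD (i - 1) ∅ ∧
              ∀ j, j < i - 1 → ¬ ((ps ++ [et]).getD i ∅) \ {w} ⊆ (ps ++ [et]).getD j ∅ := by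
          intro i h0 hi
          rw [hlenapp] at hi
          rcases Nat.lt_or_ge i ps.length with hilt | hige
          · obtain ⟨w, hw, hwnew, hwsub, hwmin⟩ := hpps.2 i h0 hilt
            rw [hgetD i hilt]
            refine ⟨w, hw, ?_, ?_, ?_⟩
            · intro j hj; rw [hgetD j (by omega)]; exact hwnew j hj
            · rw [hgetD (i - 1) (by omega)]; exact hwsub
            · intro j hj; rw [hgetD j (by omega)]; exact hwmin j hj
          · have hieq : i = ps.length := by omega
            subst hieq
            rw [hgetDlast]
            refine ⟨v, hvet, ?_, ?_, ?_⟩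
            · intro j hj; rw [hgetD j hj]; exact hpsv j hj
            · rw [hgetD (ps.length - 1) (by omega), ← hg]
              exact hglast
            · intro j hj
              rw [hgetD j (by omega), ← hg]
              intro hgsub
              have := (hpg j (by omega)).1 hgsub
              omega
        refine ⟨insert et P', ⟨Finset.insert_subset hetT (hP'sub.trans hT'T),
          ps ++ [et], by simp, ?_, ?_, ⟨⟨?_, ?_⟩, hmain⟩, ?_, ?_⟩, ?_⟩
        · rw [List.nodup_append]
          refine ⟨hpnd, List.nodup_singleton et, ?_⟩
          intro a ha b hb hab
          have : b = et := by simpa using hb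
          exact hetps (by rw [← this, ← hab]; exact ha)
        · rw [List.toFinset_append, hpfin]
          ext x; simp [or_comm]
        · intro e he
          rcases List.mem_append.1 he with h | h
          · exact hpps.1.1 e h
          · have : e = et := by simpa using h
            subst this; exact hcet
        · intro i h0 hi
          obtain ⟨w, h1, h2, h3, _⟩ := hmain i h0 hi
          exact ⟨w, h1, h2, i - 1, by omega, h3⟩
        · intro i hi
          rw [hlenapp] at hi
          rcases Nat.lt_or_ge i ps.length with hilt | hige
          · rw [hgetD i hilt]; exact hpf i hilt
          · have hieq : i = ps.length := by omega
            subst hieq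
            rw [hgetDlast]
            constructor
            · intro h
              exact absurd (heq_g f h hvf hf.1) hfg
            · omega
        · intro j hj
          rw [hlenapp] at hj
          rw [show (ps ++ [et]).length - 1 = ps.length by simp]
          rcases Nat.lt_or_ge j ps.length with hjlt | hjge
          · rw [hgetD j hjlt]
            constructor
            · intro h
              exact absurd (h hvf') (hpsv j hjlt)
            · omega
          · have hjeq : j = ps.length := by omega
            subst hjeq
            rw [hgetDlast]
            simp [hf'et]
        · intro Q hQ
          obtain ⟨hQsub, qs, hqne, hqnd, hqfin, hqps, hqf, hqf'⟩ := hQ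
          have hql : 0 < qs.length := List.length_pos_iff.2 hqne
          have hqT : ∀ i, i < qs.length → qs.getD i ∅ ∈ es.toFinset := fun i hi =>
            hQsub (hqfin ▸ List.mem_toFinset.2 (getD_mem hi))
          have hlet : qs.getD (qs.length - 1) ∅ = et :=
            hvF3 _ (hqT _ (by omega)) ((hqf' _ (by omega)).2 rfl hvf')
          have hq2 : 2 ≤ qs.length := by
            by_contra h
            have hq1 : qs.length = 1 := by omega
            have hf0 : f ⊆ et := by
              have := (hqf 0 hql).2 rfl
              rwa [show (0:ℕ) = qs.length - 1 by omega, hlet] at this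
            exact hfg (heq_g f hf0 hvf hf.1)
          set init := qs.dropLast with hinit
          have hinitlen : init.length = qs.length - 1 := by simp [hinit]
          have hqsplit : qs = init ++ [et] := by
            have h1 := List.dropLast_append_getLast hqne
            have h2 : qs.getLast hqne = qs.getD (qs.length - 1) ∅ := by
              rw [List.getD_eq_getElem _ _ (by omega), List.getLast_eq_getElem]
            rw [hinit, ← hlet, ← h2]
            exact h1.symm
          have hinitagg : ∀ i, i < qs.length - 1 → init.getD i ∅ = qs.getD i ∅ := by
            intro i hi
            rw [hinit, List.dropLast_eq_take, getD_take (by omega)]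
          have hinitT' : ∀ i, i < qs.length - 1 → init.getD i ∅ ∈ es₀.toFinset := by
            intro i hi
            rw [hinitagg i hi]
            refine (Finset.mem_insert.1 (hTins ▸ hqT i (by omega))).resolve_left ?_
            intro h
            have := nodup_getD_inj hqnd (show i < qs.length by omega) (by omega)
              (h.trans hlet.symm)
            omega
          have hprev : v ∉ qs.getD (qs.length - 1 - 1) ∅ := by
            rw [← hinitagg _ (by omega)]
            exact hT'v _ (hinitT' _ (by omega))
          obtain ⟨hnew, hsubp, hmin⟩ := new_vertex_unique hqps
            (show 0 < qs.length - 1 by omega) (by omega) (by rw [hlet]; exact hvet) hprev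
          rw [hlet] at hsubp hmin
          have hinitne : init ≠ [] := by
            rw [← List.length_pos_iff, hinitlen]; omega
          have hfend : ∀ i, i < init.length → (f ⊆ init.getD i ∅ ↔ i = 0) := by
            intro i hi
            rw [hinitlen] at hi
            rw [hinitagg i hi]
            exact hqf i (by omega)
          have hgend : ∀ j, j < init.length → (g ⊆ init.getD j ∅ ↔ j = init.length - 1) := by
            intro j hj
            rw [hinitlen] at hj ⊢
            rw [hinitagg j hj]
            constructor
            · intro hgsub
              by_contra hne'
              refine hmin j (by omega) ?_
              rw [← hg]
              exact hgsub
            · rintro rfl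
              rw [hg]
              exact hsubp
          have hqnd' : (init ++ [et]).Nodup := by rw [← hqsplit]; exact hqnd
          have hinitP : IsPseudopathBetween k es₀.toFinset f g init.toFinset := by
            refine ⟨?_, init, hinitne, (List.nodup_append.1 hqnd').1, rfl, ?_, hfend, hgend⟩
            · intro q hq
              obtain ⟨i, hi, rfl⟩ := mem_iff_getD.1 (List.mem_toFinset.1 hq)
              exact hinitT' i (by rwa [hinitlen] at hi)
            · rw [hinit, List.dropLast_eq_take]
              exact pseudo_take hqps
          have hinitP' : init.toFinset = P' := hP'u _ hinitP
          rw [← hqfin, hqsplit, List.toFinset_append, hinitP']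
          ext x; simp [or_comm]
    · -- case A : v ∉ f, v ∉ f'
      obtain ⟨P, hP, hPu⟩ := IH₀ f f' (hshadow' f hvf hf) (hshadow' f' hvf' hf') hff
      refine ⟨P, ?_, ?_⟩
      · obtain ⟨hPsub, ps, h1, h2, h3, h4, h5, h6⟩ := hP
        exact ⟨hPsub.trans hT'T, ps, h1, h2, h3, h4, h5, h6⟩
      · intro Q hQ
        obtain ⟨hQsub, qs, hqne, hqnd, hqfin, hqps, hqf, hqf'⟩ := hQ
        have hql : 0 < qs.length := List.length_pos_iff.2 hqne
        have hqT : ∀ i, i < qs.length → qs.getD i ∅ ∈ es.toFinset := fun i hi =>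
          hQsub (hqfin ▸ List.mem_toFinset.2 (getD_mem hi))
        have hqcard : ∀ i, i < qs.length → (qs.getD i ∅).card = k := fun i hi =>
          hqps.1.1 _ (getD_mem hi)
        have hqnet : ∀ i, i < qs.length → qs.getD i ∅ ≠ et := by
          intro i hi hiet
          have hvfree : ∀ j, j < qs.length → j ≠ i → v ∉ qs.getD j ∅ := by
            intro j hj hji
            refine hT'v _ ?_
            refine (Finset.mem_insert.1 (hTins ▸ hqT j hj)).resolve_left ?_
            intro h
            exact hji (nodup_getD_inj hqnd hj hi (h.trans hiet.symm))
          rcases Nat.eq_zero_or_pos i with rfl | hipos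
          · have hfg : f = g := heq_g f (hiet ▸ (hqf 0 hql).2 rfl) hvf hf.1
            rcases Nat.lt_or_ge qs.length 2 with hq1 | hq2
            · have hf'g : f' = g := heq_g f' (hiet ▸ (hqf' 0 hql).2 (by omega)) hvf' hf'.1
              exact hff (hfg.trans hf'g.symm)
            · obtain ⟨u, hu, hunew, husub, _⟩ := hqps.2 1 one_pos (by omega)
              have h1ne : v ∉ qs.getD 1 ∅ := hvfree 1 (by omega) one_ne_zero
              have hS : qs.getD 1 ∅ \ {u} = g := by
                refine heq_g _ (by rwa [Nat.sub_self, hiet] at husub) ?_ ?_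
                · simp only [Finset.mem_sdiff]; tauto
                · rw [Finset.card_sdiff_of_subset (Finset.singleton_subset_iff.2 hu),
                    hqcard 1 (by omega), Finset.card_singleton]
              have : f ⊆ qs.getD 1 ∅ := by
                rw [hfg, ← hS]; exact Finset.sdiff_subset
              exact one_ne_zero ((hqf 1 (by omega)).1 this)
          · have hprev : v ∉ qs.getD (i - 1) ∅ := hvfree (i - 1) (by omega) (by omega)
            obtain ⟨hnew, hsubp, hmin⟩ := new_vertex_unique hqps hipos hi
              (by rw [hiet]; exact hvet) hprev
            rw [hiet] at hsubp hmin
            rcases Nat.lt_or_ge i (qs.length - 1) with hilt | hige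
            · obtain ⟨u, hu, hunew, husub, humin⟩ := hqps.2 (i + 1) (by omega) (by omega)
              have hvfree1 : v ∉ qs.getD (i + 1) ∅ := hvfree (i + 1) (by omega) (by omega)
              have hsi : i + 1 - 1 = i := by omega
              rw [hsi, hiet] at husub
              refine humin (i - 1) (by omega) ?_
              refine (hsub_g _ husub ?_).trans hsubp
              simp only [Finset.mem_sdiff]; tauto
            · have hieq : i = qs.length - 1 := by omega
              have hf'sub : f' ⊆ et := hiet ▸ (hqf' i hi).2 hieq
              have : f' ⊆ qs.getD (i - 1) ∅ := (hsub_g f' hf'sub hvf').trans hsubp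
              have := (hqf' (i - 1) (by omega)).1 this
              omega
        apply hPu
        refine ⟨?_, qs, hqne, hqnd, hqfin, hqps, hqf, hqf'⟩
        intro q hq
        rw [← hqfin] at hq
        obtain ⟨i, hi, rfl⟩ := mem_iff_getD.1 (List.mem_toFinset.1 hq)
        exact (Finset.mem_insert.1 (hTins ▸ hqT i hi)).resolve_left (hqnet i hi)

end PPaux

/-- In a tight `k`-tree `T` (`k ≥ 2`), any two distinct elements `f, f'` of
the shadow of `T` are connected by a unique `(f, f')`-pseudopath. -/
theorem pseudopath_unique [DecidableEq α] (k : ℕ) (hk : 2 ≤ k)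
    (T : Finset (Finset α)) (hT : IsTightTree k T)
    (f f' : Finset α) (hf : InShadow k T f) (hf' : InShadow k T f') (hne : f ≠ f') :
    ∃! P : Finset (Finset α), IsPseudopathBetween k T f f' P := by
  obtain ⟨es, hes, hnd, hfin, hval⟩ := hT
  subst hfin
  exact PPaux.main_lemma k hk es.length es rfl hes hnd hval f f' hf hf' hne
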